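/- Fix a node i ∈ Fin n. Let q : Fin h → Fin n → ℝ be any path-wise feasible randomized update rule at i, i.e., for every w ∈ Fin h: q w y ≥ 0 for all y, ∑_y q w y = 1, and q w y = 0 whenever y ∉ H i w. Define the induced transition probability ν : Fin n → ℝ by ν j := ∑_w μ w · q w j. Then for every j ∈ Fin n one has 0 ≤ ℓ_{i,j} ≤ ν j ≤ m_{i,j} ≤ 1. (Theorem 1: the quantities ℓ_{i,j} and m_{i,j} are lower and upper bounds on the transition probability from node i to node j along any stochastic directed path.) -/
import Mathlib


/-- **Theorem 1** (bounds on transition probabilities).  Fix a node `i`.  For any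
path-wise feasible randomized update rule `q` at `i`, the induced transition
probability `ν j = ∑ w, μ w * q w j` satisfies `0 ≤ ℓ i j ≤ ν j ≤ m i j ≤ 1`. -/
theorem transition_probability_bounds
    (n h : ℕ) (hn : 1 ≤ n) (hh : 1 ≤ h)
    (H : Fin n → Fin h → Finset (Fin n))
    (hne : ∀ i w, (H i w).Nonempty)
    (μ : Fin h → ℝ) (hμ0 : ∀ w, 0 ≤ μ w) (hμ1 : ∑ w, μ w = 1)
    (i : Fin n)
    (q : Fin h → Fin n → ℝ)
    (hq0 : ∀ w y, 0 ≤ q w y)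
    (hq1 : ∀ w, ∑ y, q w y = 1)
    (hqsupp : ∀ w y, y ∉ H i w → q w y = 0)
    (j : Fin n) :
    0 ≤ ∑ w ∈ Finset.univ.filter (fun w => H i w = {j}), μ w ∧
    ∑ w ∈ Finset.univ.filter (fun w => H i w = {j}), μ w ≤ ∑ w, μ w * q w j ∧
    ∑ w, μ w * q w j ≤ ∑ w ∈ Finset.univ.filter (fun w => j ∈ H i w), μ w ∧
    ∑ w ∈ Finset.univ.filter (fun w => j ∈ H i w), μ w ≤ 1 := by
  have hq1' : ∀ w, q w j ≤ 1 := fun w => by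
    rw [← hq1 w]
    exact Finset.single_le_sum (fun y _ => hq0 w y) (Finset.mem_univ j)
  have hsingle : ∀ w, H i w = {j} → q w j = 1 := by
    intro w hw
    have := hq1 w
    rw [Finset.sum_eq_single j (fun y _ hy => hqsupp w y (by simp [hw, hy]))
      (fun hj => absurd (Finset.mem_univ j) hj)] at this
    exact this
  refine ⟨Finset.sum_nonneg fun w _ => hμ0 w, ?_, ?_, ?_⟩
  · calc ∑ w ∈ Finset.univ.filter (fun w => H i w = {j}), μ w
        = ∑ w ∈ Finset.univ.filter (fun w => H i w = {j}), μ w * q w j := by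
          apply Finset.sum_congr rfl
          intro w hw
          rw [hsingle w (Finset.mem_filter.mp hw).2, mul_one]
      _ ≤ ∑ w, μ w * q w j := by
          apply Finset.sum_le_sum_of_subset_of_nonneg (Finset.filter_subset _ _)
          exact fun w _ _ => mul_nonneg (hμ0 w) (hq0 w j)
  · rw [← Finset.sum_filter_add_sum_filter_not Finset.univ (fun w => j ∈ H i w)
      (fun w => μ w * q w j)]
    have h2 : ∑ w ∈ Finset.univ.filter (fun w => j ∉ H i w), μ w * q w j = 0 := by
      apply Finset.sum_eq_zero
      intro w hw
      rw [hqsupp w j (Finset.mem_filter.mp hw).2, mul_zero]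
    rw [h2, add_zero]
    apply Finset.sum_le_sum
    intro w _
    calc μ w * q w j ≤ μ w * 1 := by
          exact mul_le_mul_of_nonneg_left (hq1' w) (hμ0 w)
      _ = μ w := mul_one _
  · rw [← hμ1]
    exact Finset.sum_le_sum_of_subset_of_nonneg (Finset.filter_subset _ _)
      fun w _ _ => hμ0 w
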